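/- Let g be the probability mass function of a sum of m independent Bernoulli random variables. Then for every integer k: 2·g_k³ − 3·g_{k-1}·g_k·g_{k+1} + g_{k-1}²·g_{k+2} ≥ 0. -/

import Mathlib

open Finset

/-- Probability mass function of a sum of independent Bernoulli random variables
indexed by the finite set `I`, with parameters `p i`. -/
def bernoulliSumPMF (I : Finset ℕ) (p : ℕ → ℝ) (k : ℤ) : ℝ :=
  if 0 ≤ k then
    ∑ S ∈ I.powersetCard k.toNat, (∏ i ∈ S, p i) * (∏ i ∈ I \ S, (1 - p i))
  else 0

private def Yq (g : ℤ → ℝ) (w y s : ℤ) : ℝ := g w * g (y+s) - g y * g (w+s)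

private def M3q (g : ℤ → ℝ) (x y z : ℤ) : ℝ :=
  g x * (g (y+1) * g (z+2) - g (z+1) * g (y+2))
  - g y * (g (x+1) * g (z+2) - g (z+1) * g (x+2))
  + g z * (g (x+1) * g (y+2) - g (y+1) * g (x+2))

private def Vq (g : ℤ → ℝ) (k : ℤ) : ℝ :=
  g (k-1)^2 * g k - 2 * g (k-2) * g k^2 + g (k-2) * g (k-1) * g (k+1)

private lemma sum_pcs_succ (m n : ℕ) (p : ℕ → ℝ) :
    ∑ S ∈ (range (m+1)).powersetCard (n+1), (∏ i ∈ S, p i) * (∏ i ∈ (range (m+1)) \ S, (1 - p i))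
  = (1 - p m) * (∑ S ∈ (range m).powersetCard (n+1), (∏ i ∈ S, p i) * ∏ i ∈ (range m) \ S, (1 - p i))
  + p m * (∑ S ∈ (range m).powersetCard n, (∏ i ∈ S, p i) * ∏ i ∈ (range m) \ S, (1 - p i)) := by
  have hm : m ∉ range m := notMem_range_self
  rw [range_add_one, powersetCard_succ_insert hm]
  have hdisj : Disjoint ((range m).powersetCard (n+1)) (((range m).powersetCard n).image (insert m)) := by
    rw [disjoint_left]
    intro S hS hS'
    obtain ⟨T, hT, rfl⟩ := mem_image.mp hS'
    have : m ∈ insert m T := mem_insert_self _ _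
    have hsub := (mem_powersetCard.mp hS).1
    exact hm (hsub this)
  rw [sum_union hdisj]
  congr 1
  · rw [mul_sum]
    apply sum_congr rfl
    intro S hS
    have hmS : m ∉ S := fun h => hm ((mem_powersetCard.mp hS).1 h)
    have h1 : insert m (range m) \ S = insert m (range m \ S) := by
      ext a
      simp only [mem_sdiff, mem_insert]
      constructor
      · rintro ⟨h2 | h2, h3⟩
        · exact Or.inl h2
        · exact Or.inr ⟨h2, h3⟩
      · rintro (rfl | ⟨h2, h3⟩)
        · exact ⟨Or.inl rfl, hmS⟩
        · exact ⟨Or.inr h2, h3⟩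
    rw [h1, prod_insert (fun h => hm (mem_sdiff.mp h).1)]
    ring
  · rw [sum_image, mul_sum]
    · apply sum_congr rfl
      intro S hS
      have hmS : m ∉ S := fun h => hm ((mem_powersetCard.mp hS).1 h)
      have h1 : insert m (range m) \ insert m S = range m \ S := by
        ext a
        simp only [mem_sdiff, mem_insert]
        constructor
        · rintro ⟨h2 | h2, h3⟩
          · exact absurd (Or.inl h2) h3
          · exact ⟨h2, fun h4 => h3 (Or.inr h4)⟩
        · rintro ⟨h2, h3⟩
          refine ⟨Or.inr h2, ?_⟩
          rintro (rfl | h4)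
          · exact hm h2
          · exact h3 h4
      rw [h1, prod_insert hmS]
      ring
    · intro a ha b hb hab
      have hma : m ∉ a := fun h => hm ((mem_powersetCard.mp ha).1 h)
      have hmb : m ∉ b := fun h => hm ((mem_powersetCard.mp hb).1 h)
      rw [← erase_insert hma, ← erase_insert hmb, hab]

private lemma pmf_succ (m : ℕ) (p : ℕ → ℝ) (k : ℤ) :
    bernoulliSumPMF (range (m+1)) p k
      = (1 - p m) * bernoulliSumPMF (range m) p k + p m * bernoulliSumPMF (range m) p (k-1) := by
  unfold bernoulliSumPMF
  rcases lt_trichotomy k 0 with hk | hk | hk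
  · rw [if_neg (by omega), if_neg (by omega), if_neg (by omega)]; ring
  · subst hk
    rw [if_pos le_rfl, if_pos le_rfl, if_neg (by omega)]
    simp only [Int.toNat_zero, powersetCard_zero, sum_singleton, prod_empty, sdiff_empty,
      one_mul]
    rw [prod_range_succ]
    ring
  · rw [if_pos (by omega), if_pos (by omega), if_pos (by omega)]
    have hn : k.toNat = (k-1).toNat + 1 := by omega
    rw [hn, sum_pcs_succ]

private lemma pmf_zero (p : ℕ → ℝ) (k : ℤ) :
    bernoulliSumPMF (range 0) p k = if k = 0 then 1 else 0 := by
  unfold bernoulliSumPMF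
  rcases lt_trichotomy k 0 with hk | hk | hk
  · rw [if_neg (by omega), if_neg (by omega)]
  · subst hk
    rw [if_pos le_rfl, if_pos rfl]
    simp
  · rw [if_pos (by omega), if_neg (by omega)]
    have h0 : (range 0).powersetCard k.toNat = ∅ := by
      rw [range_zero]
      rw [powersetCard_eq_empty]
      simp
      omega
    rw [h0, sum_empty]

set_option maxHeartbeats 2000000 in
private lemma bernoulli_key (m : ℕ) : ∀ (p : ℕ → ℝ), (∀ i ∈ range m, 0 ≤ p i ∧ p i ≤ 1) →
    (∀ k, 0 ≤ bernoulliSumPMF (range m) p k) ∧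
    (∀ w y s : ℤ, y ≤ w → 0 ≤ s → 0 ≤ Yq (bernoulliSumPMF (range m) p) w y s) ∧
    (∀ x y z : ℤ, z ≤ y → y ≤ x → 0 ≤ M3q (bernoulliSumPMF (range m) p) x y z) ∧
    (∀ k, 0 ≤ Vq (bernoulliSumPMF (range m) p) k) := by
  induction m with
  | zero =>
    intro p _hp
    have hχ : ∀ k : ℤ, bernoulliSumPMF (range 0) p k = if k = 0 then 1 else 0 := pmf_zero p
    set G := bernoulliSumPMF (range 0) p with hG
    have hN : ∀ k, 0 ≤ G k := by
      intro k; rw [hχ]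
      split <;> norm_num
    refine ⟨hN, ?_, ?_, ?_⟩
    · intro w y s hyw hs
      simp only [Yq]
      by_cases hy : y = 0
      · by_cases hws : w + s = 0
        · have hw : w = 0 := by omega
          have hs0 : s = 0 := by omega
          subst hy; subst hw; subst hs0
          simp
        · have h0 : G (w+s) = 0 := by rw [hχ]; exact if_neg hws
          rw [h0, mul_zero, sub_zero]
          exact mul_nonneg (hN w) (hN (y+s))
      · have h0 : G y = 0 := by rw [hχ]; exact if_neg hy
        rw [h0, zero_mul, sub_zero]
        exact mul_nonneg (hN w) (hN (y+s))
    · intro x y z hzy hyx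
      have hcol : ∀ u : ℤ, (u = 0 ∨ u = -1 ∨ u = -2) ∨ (G u = 0 ∧ G (u+1) = 0 ∧ G (u+2) = 0) := by
        intro u
        by_cases h : u = 0 ∨ u = -1 ∨ u = -2
        · exact Or.inl h
        · refine Or.inr ⟨?_, ?_, ?_⟩ <;> rw [hχ] <;> exact if_neg (by omega)
      rcases hcol x with hx | ⟨e1, e2, e3⟩
      rotate_left
      · have : M3q G x y z = 0 := by simp only [M3q]; rw [e1, e2, e3]; ring
        rw [this]
      rcases hcol y with hy | ⟨e1, e2, e3⟩
      rotate_left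
      · have : M3q G x y z = 0 := by simp only [M3q]; rw [e1, e2, e3]; ring
        rw [this]
      rcases hcol z with hz | ⟨e1, e2, e3⟩
      rotate_left
      · have : M3q G x y z = 0 := by simp only [M3q]; rw [e1, e2, e3]; ring
        rw [this]
      have hx1 : -2 ≤ x := by omega
      have hx2 : x ≤ 0 := by omega
      have hy1 : -2 ≤ y := by omega
      have hy2 : y ≤ 0 := by omega
      have hz1 : -2 ≤ z := by omega
      have hz2 : z ≤ 0 := by omega
      interval_cases x <;> interval_cases y <;> interval_cases z <;>
        first
          | (simp only [M3q, hχ]; norm_num)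
          | omega
    · intro k
      have f1 : G (k-1) * G k = 0 := by
        by_cases hk : k = 0
        · have h0 : G (k-1) = 0 := by rw [hχ]; exact if_neg (by omega)
          rw [h0, zero_mul]
        · have h0 : G k = 0 := by rw [hχ]; exact if_neg hk
          rw [h0, mul_zero]
      have f2 : G (k-2) * G k = 0 := by
        by_cases hk : k = 0
        · have h0 : G (k-2) = 0 := by rw [hχ]; exact if_neg (by omega)
          rw [h0, zero_mul]
        · have h0 : G k = 0 := by rw [hχ]; exact if_neg hk
          rw [h0, mul_zero]
      have f3 : G (k-2) * G (k-1) = 0 := by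
        by_cases hk : k - 1 = 0
        · have h0 : G (k-2) = 0 := by rw [hχ]; exact if_neg (by omega)
          rw [h0, zero_mul]
        · have h0 : G (k-1) = 0 := by rw [hχ]; exact if_neg hk
          rw [h0, mul_zero]
      have e : Vq G k = 0 := by
        simp only [Vq]
        linear_combination G (k-1) * f1 - 2 * G k * f2 + G (k+1) * f3
      rw [e]
  | succ m ih =>
    intro p hp
    obtain ⟨ihN, ihY, ihM, ihV⟩ :=
      ih p (fun i hi => hp i (mem_range.mpr (Nat.lt_succ_of_lt (mem_range.mp hi))))
    obtain ⟨hp0, hp1⟩ := hp m (mem_range.mpr (Nat.lt_succ_self m))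
    have hq0 : (0:ℝ) ≤ 1 - p m := by linarith
    set G := bernoulliSumPMF (range m) p with hG
    set G' := bernoulliSumPMF (range (m+1)) p with hG'
    have hrec : ∀ j : ℤ, G' j = (1 - p m) * G j + p m * G (j-1) := fun j => pmf_succ m p j
    have hN : ∀ k, 0 ≤ G' k := by
      intro k
      rw [hrec k]
      exact add_nonneg (mul_nonneg hq0 (ihN k)) (mul_nonneg hp0 (ihN (k-1)))
    refine ⟨hN, ?_, ?_, ?_⟩
    · -- Yq closure
      intro w y s hyw hs
      rcases hyw.eq_or_lt with rfl | hyw'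
      · have e : Yq G' y y s = 0 := by simp only [Yq]; ring
        rw [e]
      rcases hs.eq_or_lt with rfl | hs'
      · have e : Yq G' w y 0 = 0 := by simp only [Yq, add_zero]; ring
        rw [e]
      have h0 := ihY w y s hyw hs
      have h1 := ihY w y (s-1) hyw (by omega)
      have h2 := ihY (w-1) (y-1) (s+1) (by omega) (by omega)
      have h3 := ihY (w-1) (y-1) s (by omega) hs
      have key : Yq G' w y s
          = (1 - p m)^2 * Yq G w y s
          + ((1 - p m) * p m) * (Yq G w y (s-1) + Yq G (w-1) (y-1) (s+1))
          + (p m)^2 * Yq G (w-1) (y-1) s := by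
        simp only [Yq]
        rw [hrec w, hrec y, hrec (y+s), hrec (w+s)]
        ring
      rw [key]
      have t1 : 0 ≤ (1 - p m)^2 * Yq G w y s := mul_nonneg (by positivity) h0
      have t2 : 0 ≤ ((1 - p m) * p m) * (Yq G w y (s-1) + Yq G (w-1) (y-1) (s+1)) :=
        mul_nonneg (mul_nonneg hq0 hp0) (add_nonneg h1 h2)
      have t3 : 0 ≤ (p m)^2 * Yq G (w-1) (y-1) s := mul_nonneg (by positivity) h3
      linarith
    · -- M3q closure
      intro x y z hzy hyx
      rcases hyx.eq_or_lt with rfl | hyx'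
      · have e : M3q G' y y z = 0 := by simp only [M3q]; ring
        rw [e]
      rcases hzy.eq_or_lt with rfl | hzy'
      · have e : M3q G' x z z = 0 := by simp only [M3q]; ring
        rw [e]
      have h000 := ihM x y z hzy hyx
      have h100 := ihM (x-1) y z hzy (by omega)
      have h010 := ihM x (y-1) z (by omega) (by omega)
      have h001 := ihM x y (z-1) (by omega) hyx
      have h110 := ihM (x-1) (y-1) z (by omega) (by omega)
      have h101 := ihM (x-1) y (z-1) (by omega) (by omega)
      have h011 := ihM x (y-1) (z-1) (by omega) (by omega)
      have h111 := ihM (x-1) (y-1) (z-1) (by omega) (by omega)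
      have key : M3q G' x y z
          = (1 - p m)^3 * M3q G x y z
          + (1 - p m)^2 * p m * (M3q G (x-1) y z + M3q G x (y-1) z + M3q G x y (z-1))
          + (1 - p m) * (p m)^2 * (M3q G (x-1) (y-1) z + M3q G (x-1) y (z-1) + M3q G x (y-1) (z-1))
          + (p m)^3 * M3q G (x-1) (y-1) (z-1) := by
        simp only [M3q]
        rw [hrec x, hrec (x+1), hrec (x+2), hrec y, hrec (y+1), hrec (y+2),
          hrec z, hrec (z+1), hrec (z+2)]
        ring
      rw [key]
      have t1 : 0 ≤ (1 - p m)^3 * M3q G x y z := mul_nonneg (by positivity) h000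
      have t2 : 0 ≤ (1 - p m)^2 * p m * (M3q G (x-1) y z + M3q G x (y-1) z + M3q G x y (z-1)) :=
        mul_nonneg (mul_nonneg (by positivity) hp0) (by linarith)
      have t3 : 0 ≤ (1 - p m) * (p m)^2 *
          (M3q G (x-1) (y-1) z + M3q G (x-1) y (z-1) + M3q G x (y-1) (z-1)) :=
        mul_nonneg (mul_nonneg hq0 (by positivity)) (by linarith)
      have t4 : 0 ≤ (p m)^3 * M3q G (x-1) (y-1) (z-1) := mul_nonneg (by positivity) h111
      linarith
    · -- Vq closure
      intro k
      have hV1 : 0 ≤ G (k-1)^3 - G (k-2) * G (k-1) * G k - 2 * G (k-3) * G k^2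
          + G (k-2)^2 * G (k+1) + G (k-3) * G (k-1) * G (k+1) := by
        rcases (ihN (k-2)).eq_or_lt with hb | hb
        · have hA := ihY (k-2) (k-3) 1 (by omega) (by omega)
          have hB := ihY (k-1) (k-3) 1 (by omega) (by omega)
          simp only [Yq] at hA hB
          rw [show k-3+1 = k-2 by ring, show k-2+1 = k-1 by ring] at hA
          rw [show k-3+1 = k-2 by ring, show k-1+1 = k by ring] at hB
          have hc1 : G (k-2) * G (k-2) = 0 := by rw [← hb]; ring
          have hc2 : G (k-1) * G (k-2) = 0 := by rw [← hb]; ring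
          have hA0 : G (k-3) * G (k-1) = 0 :=
            le_antisymm (by linarith) (mul_nonneg (ihN _) (ihN _))
          have hB0 : G (k-3) * G k = 0 :=
            le_antisymm (by linarith) (mul_nonneg (ihN _) (ihN _))
          have e : G (k-1)^3 - G (k-2) * G (k-1) * G k - 2 * G (k-3) * G k^2
              + G (k-2)^2 * G (k+1) + G (k-3) * G (k-1) * G (k+1) = G (k-1)^3 := by
            linear_combination (G (k-1) * G k - G (k-2) * G (k+1)) * hb
              + (-2 * G k) * hB0 + G (k+1) * hA0
          rw [e]
          exact pow_nonneg (ihN _) 3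
        · have cert : G (k-2) * (G (k-1)^3 - G (k-2) * G (k-1) * G k - 2 * G (k-3) * G k^2
              + G (k-2)^2 * G (k+1) + G (k-3) * G (k-1) * G (k+1))
              = 2 * G (k-3) * Vq G k + G (k-2) * M3q G (k-1) (k-2) (k-3) + G k * Vq G (k-1) := by
            simp only [Vq, M3q]
            ring
          have j1 : 0 ≤ 2 * G (k-3) * Vq G k := by
            have := mul_nonneg (ihN (k-3)) (ihV k); linarith
          have j2 : 0 ≤ G (k-2) * M3q G (k-1) (k-2) (k-3) :=
            mul_nonneg (ihN _) (ihM (k-1) (k-2) (k-3) (by omega) (by omega))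
          have j3 : 0 ≤ G k * Vq G (k-1) := mul_nonneg (ihN _) (ihV (k-1))
          nlinarith [cert, j1, j2, j3, hb]
      have hV2 : 0 ≤ 2 * G (k-2)^2 * G k - 3 * G (k-3) * G (k-1) * G k
          + G (k-3) * G (k-2) * G (k+1) := by
        rcases (ihN (k-1)).eq_or_lt with hb | hb
        · have e : 2 * G (k-2)^2 * G k - 3 * G (k-3) * G (k-1) * G k
              + G (k-3) * G (k-2) * G (k+1)
              = 2 * G (k-2)^2 * G k + G (k-3) * G (k-2) * G (k+1) := by
            rw [← hb]; ring
          rw [e]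
          have j1 : 0 ≤ G (k-2)^2 * G k := mul_nonneg (sq_nonneg _) (ihN _)
          have j2 : 0 ≤ G (k-3) * G (k-2) * G (k+1) :=
            mul_nonneg (mul_nonneg (ihN _) (ihN _)) (ihN _)
          linarith
        · have cert : G (k-1) * (2 * G (k-2)^2 * G k - 3 * G (k-3) * G (k-1) * G k
              + G (k-3) * G (k-2) * G (k+1))
              = G (k-3) * Vq G k + 2 * G k * Vq G (k-1) := by
            simp only [Vq]
            ring
          have j1 : 0 ≤ G (k-3) * Vq G k := mul_nonneg (ihN _) (ihV k)
          have j2 : 0 ≤ 2 * G k * Vq G (k-1) := by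
            have := mul_nonneg (ihN k) (ihV (k-1)); linarith
          nlinarith [cert, j1, j2, hb]
      have key : Vq G' k
          = (1 - p m)^3 * Vq G k
          + (1 - p m)^2 * p m * (G (k-1)^3 - G (k-2) * G (k-1) * G k - 2 * G (k-3) * G k^2
              + G (k-2)^2 * G (k+1) + G (k-3) * G (k-1) * G (k+1))
          + (1 - p m) * (p m)^2 * (2 * G (k-2)^2 * G k - 3 * G (k-3) * G (k-1) * G k
              + G (k-3) * G (k-2) * G (k+1))
          + (p m)^3 * Vq G (k-1) := by
        simp only [Vq]
        rw [hrec (k-1), hrec k, hrec (k-2), hrec (k+1)]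
        ring
      rw [key]
      have t1 : 0 ≤ (1 - p m)^3 * Vq G k := mul_nonneg (by positivity) (ihV k)
      have t2 : 0 ≤ (1 - p m)^2 * p m * (G (k-1)^3 - G (k-2) * G (k-1) * G k
          - 2 * G (k-3) * G k^2 + G (k-2)^2 * G (k+1) + G (k-3) * G (k-1) * G (k+1)) :=
        mul_nonneg (mul_nonneg (by positivity) hp0) hV1
      have t3 : 0 ≤ (1 - p m) * (p m)^2 * (2 * G (k-2)^2 * G k - 3 * G (k-3) * G (k-1) * G k
          + G (k-3) * G (k-2) * G (k+1)) :=
        mul_nonneg (mul_nonneg hq0 (by positivity)) hV2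
      have t4 : 0 ≤ (p m)^3 * Vq G (k-1) := mul_nonneg (by positivity) (ihV (k-1))
      linarith

theorem bernoulli_sum_cubic_C3 (m : ℕ) (p : ℕ → ℝ)
    (hp : ∀ i ∈ Finset.range m, 0 ≤ p i ∧ p i ≤ 1)
    (g : ℤ → ℝ) (hg : ∀ k, g k = bernoulliSumPMF (Finset.range m) p k) (k : ℤ) :
    0 ≤ 2 * g k ^ 3 - 3 * g (k - 1) * g k * g (k + 1) + g (k - 1) ^ 2 * g (k + 2) := by
  obtain ⟨hN, -, -, hV⟩ := bernoulli_key m p hp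
  simp only [hg]
  set G := bernoulliSumPMF (range m) p with hGdef
  rcases (hN k).eq_or_lt with hc | hc
  · have e : 2 * G k ^ 3 - 3 * G (k - 1) * G k * G (k + 1) + G (k - 1) ^ 2 * G (k + 2)
        = G (k - 1) ^ 2 * G (k + 2) := by rw [← hc]; ring
    rw [e]
    exact mul_nonneg (sq_nonneg _) (hN _)
  · have cert : G k * (2 * G k ^ 3 - 3 * G (k - 1) * G k * G (k + 1) + G (k - 1) ^ 2 * G (k + 2))
        = 2 * (G k ^ 2 - G (k - 1) * G (k + 1)) ^ 2 + G (k - 1) * Vq G (k + 1) := by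
      simp only [Vq]; ring
    nlinarith [cert, sq_nonneg (G k ^ 2 - G (k - 1) * G (k + 1)),
      mul_nonneg (hN (k - 1)) (hV (k + 1)), hc]
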